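/- Let α < 1, y₀ ∈ ℝ, and z : [0,∞) → ℝ continuous with z(0)=0. If y(t) = y₀ + z(t) + α·max_{0≤s≤t} y(s) for all t, then max_{0≤s≤t} y(s) = (1/(1−α))·(y₀ + max_{0≤s≤t} z(s)). -/

import Mathlib

open Set

/-- Let α < 1, y₀ ∈ ℝ, z continuous with z 0 = 0. If y is continuous and
y(t) = y₀ + z(t) + α·max_{0≤s≤t} y(s) for all t ≥ 0, then
max_{0≤s≤t} y(s) = (1/(1−α))·(y₀ + max_{0≤s≤t} z(s)). -/
theorem perturbed_equation_running_max (α y₀ : ℝ) (hα : α < 1)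
    (z : ℝ → ℝ) (hz : Continuous z) (hz0 : z 0 = 0)
    (y : ℝ → ℝ) (hy : Continuous y)
    (heq : ∀ t : ℝ, 0 ≤ t → y t = y₀ + z t + α * sSup (y '' Icc 0 t)) :
    ∀ t : ℝ, 0 ≤ t →
      sSup (y '' Icc 0 t) = (1 / (1 - α)) * (y₀ + sSup (z '' Icc 0 t)) := by
  intro t ht
  have h1α : (0:ℝ) < 1 - α := by linarith
  have hbdd : ∀ u : ℝ, BddAbove (y '' Icc 0 u) :=
    fun u => isCompact_Icc.bddAbove_image hy.continuousOn
  have hne : ∀ u : ℝ, 0 ≤ u → (y '' Icc 0 u).Nonempty :=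
    fun u hu => ⟨y 0, mem_image_of_mem y ⟨le_rfl, hu⟩⟩
  have hmono : ∀ u v : ℝ, 0 ≤ u → u ≤ v →
      sSup (y '' Icc 0 u) ≤ sSup (y '' Icc 0 v) := by
    intro u v hu huv
    exact csSup_le_csSup (hbdd v) (hne u hu)
      (Set.image_mono (f := y) (Icc_subset_Icc_right huv))
  have hle : ∀ u v : ℝ, u ∈ Icc 0 v → y u ≤ sSup (y '' Icc 0 v) :=
    fun u v hu => le_csSup (hbdd v) (mem_image_of_mem y hu)
  -- point attaining max of y
  obtain ⟨sm, hsm, hMy⟩ :=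
    isCompact_Icc.exists_sSup_image_eq ⟨0, le_rfl, ht⟩ hy.continuousOn
  -- point attaining max of z
  obtain ⟨sz, hsz, hMz⟩ :=
    isCompact_Icc.exists_sSup_image_eq ⟨0, le_rfl, ht⟩ hz.continuousOn
  have hMsm : sSup (y '' Icc 0 sm) = sSup (y '' Icc 0 t) := by
    refine le_antisymm (hmono sm t hsm.1 hsm.2) ?_
    rw [hMy]
    exact hle sm sm ⟨hsm.1, le_rfl⟩
  have h1 : (1 - α) * sSup (y '' Icc 0 t) = y₀ + z sm := by
    have := heq sm hsm.1
    rw [hMsm, ← hMy] at this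
    linarith
  have hzsm : z sm ≤ sSup (z '' Icc 0 t) :=
    le_csSup (isCompact_Icc.bddAbove_image hz.continuousOn)
      (mem_image_of_mem z hsm)
  have h2 : y₀ + sSup (z '' Icc 0 t) ≤ (1 - α) * sSup (y '' Icc 0 t) := by
    have hy1 : y sz ≤ sSup (y '' Icc 0 sz) := hle sz sz ⟨hsz.1, le_rfl⟩
    have heqz := heq sz hsz.1
    rw [← hMz] at heqz
    have hMs : (1 - α) * sSup (y '' Icc 0 sz) ≥ y₀ + sSup (z '' Icc 0 t) := by
      nlinarith
    have := hmono sz t hsz.1 hsz.2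
    nlinarith
  have h3 : (1 - α) * sSup (y '' Icc 0 t) = y₀ + sSup (z '' Icc 0 t) := by
    linarith
  field_simp
  linarith [h3]
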